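/- For all integers 2 ≤ s ≤ m, the minimum size of a label set for M(s,m) satisfies the upper bound L_min(s,m) ≤ 2^s · (2⌈log₂ |M(s,m)|⌉ − 1), where |M(s,m)| is the number of masks in the set. -/

import Mathlib

/-- The recursively constructed mask set `M(s, m)`, viewed as a set of vectors of
length `2^m` indexed by the points of `𝔽₂^m` (i.e. functions `(Fin m → ZMod 2) → ZMod 2`).
For a point `p : Fin (m+1) → ZMod 2`, the coordinate `p 0` selects the half
(left half for `p 0 = 0`) and `Fin.tail p` the position inside that half, so that
the concatenation `[x, y]` corresponds to
`fun p => if p 0 = 0 then x (Fin.tail p) else y (Fin.tail p)`. -/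
def maskSet : (m : ℕ) → ℕ → Set ((Fin m → ZMod 2) → ZMod 2)
  | 0, _ => Set.univ
  | m + 1, s =>
    if s ≤ 1 then {fun _ => 0, fun _ => 1}
    else if m + 1 ≤ Nat.clog 2 s then Set.univ
    else
      ((fun g : (Fin m → ZMod 2) → ZMod 2 => fun p => g (Fin.tail p)) '' maskSet m s) ∪
        ⋃ i ∈ Finset.Ico 1 s,
          {f | ∃ x ∈ maskSet m i, ∃ y ∈ maskSet m (s - i),
            f = fun p => if p 0 = 0 then x (Fin.tail p) else y (Fin.tail p)}

/-- A finite set `L` of coordinate positions is a label set for (distinguishes) `S`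
if distinct vectors of `S` have distinct restrictions to `L`. -/
def Distinguishes {ι : Type*} (L : Finset ι) (S : Set (ι → ZMod 2)) : Prop :=
  ∀ x ∈ S, ∀ y ∈ S, (∀ i ∈ L, x i = y i) → x = y

/-- `L_min(s, m)`: the minimum cardinality of a label set for `M(s, m)`. -/
noncomputable def Lmin (s m : ℕ) : ℕ :=
  sInf {k | ∃ L : Finset (Fin m → ZMod 2), L.card = k ∧ Distinguishes L (maskSet m s)}

/-- Concatenation of two halves. -/
def glue {m : ℕ} (x y : (Fin m → ZMod 2) → ZMod 2) : (Fin (m+1) → ZMod 2) → ZMod 2 :=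
  fun p => if p 0 = 0 then x (Fin.tail p) else y (Fin.tail p)

/-- Hamming distance (as number of disagreeing coordinates). -/
def dC {m : ℕ} (f g : (Fin m → ZMod 2) → ZMod 2) : ℕ :=
  (Finset.univ.filter fun p => f p ≠ g p).card

lemma zmod2_cases : ∀ c : ZMod 2, c = 0 ∨ c = 1 := by decide

lemma dC_pos {m : ℕ} {f g : (Fin m → ZMod 2) → ZMod 2} (h : f ≠ g) : 1 ≤ dC f g := by
  obtain ⟨p, hp⟩ := Function.ne_iff.mp h
  exact Finset.card_pos.mpr ⟨p, Finset.mem_filter.mpr ⟨Finset.mem_univ p, hp⟩⟩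

lemma card_half {m : ℕ} (u v w z : (Fin m → ZMod 2) → ZMod 2) (c : ZMod 2) :
    ((Finset.univ : Finset (Fin (m+1) → ZMod 2)).filter
      (fun p => (glue u v p ≠ glue w z p) ∧ p 0 = c)).card
      = if c = 0 then dC u w else dC v z := by
  classical
  rcases zmod2_cases c with rfl | rfl
  · rw [if_pos rfl]
    apply Finset.card_nbij' (fun p => Fin.tail p) (fun q => Fin.cons 0 q)
    · intro p hp
      rw [Finset.mem_coe, Finset.mem_filter] at hp ⊢
      obtain ⟨-, hne, h0⟩ := hp
      refine ⟨Finset.mem_univ _, ?_⟩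
      simpa [glue, h0] using hne
    · intro q hq
      rw [Finset.mem_coe, Finset.mem_filter] at hq ⊢
      refine ⟨Finset.mem_univ _, ?_, by simp⟩
      simpa [glue] using hq.2
    · intro p hp
      rw [Finset.mem_coe, Finset.mem_filter] at hp
      have := Fin.cons_self_tail p
      rwa [hp.2.2] at this
    · intro q _
      exact Fin.tail_cons _ _
  · rw [if_neg (by decide)]
    apply Finset.card_nbij' (fun p => Fin.tail p) (fun q => Fin.cons 1 q)
    · intro p hp
      rw [Finset.mem_coe, Finset.mem_filter] at hp ⊢
      obtain ⟨-, hne, h0⟩ := hp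
      refine ⟨Finset.mem_univ _, ?_⟩
      simpa [glue, h0] using hne
    · intro q hq
      rw [Finset.mem_coe, Finset.mem_filter] at hq ⊢
      refine ⟨Finset.mem_univ _, ?_, by simp⟩
      simpa [glue] using hq.2
    · intro p hp
      rw [Finset.mem_coe, Finset.mem_filter] at hp
      have := Fin.cons_self_tail p
      rwa [hp.2.2] at this
    · intro q _
      exact Fin.tail_cons _ _

lemma dC_glue {m : ℕ} (u v w z : (Fin m → ZMod 2) → ZMod 2) :
    dC (glue u v) (glue w z) = dC u w + dC v z := by
  classical
  have h := Finset.card_filter_add_card_filter_not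
    (s := (Finset.univ : Finset (Fin (m+1) → ZMod 2)).filter
      (fun p => glue u v p ≠ glue w z p)) (p := fun p => p 0 = 0)
  rw [Finset.filter_filter, Finset.filter_filter] at h
  have h0 := card_half u v w z 0
  have h1 := card_half u v w z 1
  rw [if_pos rfl] at h0
  rw [if_neg (by decide)] at h1
  rw [dC, ← h, h0]
  congr 1
  rw [← h1]
  congr 1
  apply Finset.filter_congr
  intro p _
  constructor
  · rintro ⟨ha, hb⟩
    rcases zmod2_cases (p 0) with h | h
    · exact absurd h hb
    · exact ⟨ha, h⟩
  · rintro ⟨ha, hb⟩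
    exact ⟨ha, by rw [hb]; decide⟩

lemma const_mem (c : ZMod 2) : ∀ (m s : ℕ), 1 ≤ s → (fun _ => c) ∈ maskSet m s := by
  intro m
  induction m with
  | zero => intro s _; simp [maskSet]
  | succ m ih =>
    intro s hs
    by_cases h1 : s ≤ 1
    · rw [maskSet, if_pos h1]
      rcases zmod2_cases c with rfl | rfl
      · exact Set.mem_insert _ _
      · exact Set.mem_insert_iff.mpr (Or.inr rfl)
    · rw [maskSet, if_neg h1]
      by_cases h2 : m + 1 ≤ Nat.clog 2 s
      · rw [if_pos h2]; trivial
      · rw [if_neg h2]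
        exact Set.mem_union_left _ ⟨fun _ => c, ih s hs, rfl⟩

lemma mem_rec {m s : ℕ} (hs : 1 ≤ s) {f : (Fin (m+1) → ZMod 2) → ZMod 2}
    (hf : f ∈ maskSet (m+1) s) :
    (2 ≤ s ∧ m + 1 ≤ Nat.clog 2 s) ∨
    ∃ i j x y, 1 ≤ i ∧ 1 ≤ j ∧ i ≤ s ∧ j ≤ s ∧
      (x = y ∨ (i ≤ s - 1 ∧ j ≤ s - 1)) ∧
      x ∈ maskSet m i ∧ y ∈ maskSet m j ∧ f = glue x y := by
  by_cases h1 : s ≤ 1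
  · rw [maskSet, if_pos h1] at hf
    have hs1 : s = 1 := le_antisymm h1 hs
    subst hs1
    refine Or.inr ?_
    rcases hf with hf | hf
    · exact ⟨1, 1, fun _ => 0, fun _ => 0, le_refl _, le_refl _, le_refl _, le_refl _,
        Or.inl rfl, const_mem 0 m 1 le_rfl, const_mem 0 m 1 le_rfl, by
          rw [hf]; funext p; simp [glue]⟩
    · rw [Set.mem_singleton_iff] at hf
      exact ⟨1, 1, fun _ => 1, fun _ => 1, le_refl _, le_refl _, le_refl _, le_refl _,
        Or.inl rfl, const_mem 1 m 1 le_rfl, const_mem 1 m 1 le_rfl, by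
          rw [hf]; funext p; simp [glue]⟩
  · rw [maskSet, if_neg h1] at hf
    by_cases h2 : m + 1 ≤ Nat.clog 2 s
    · exact Or.inl ⟨by omega, h2⟩
    · rw [if_neg h2] at hf
      refine Or.inr ?_
      rcases hf with hf | hf
      · obtain ⟨x, hx, hfx⟩ := hf
        refine ⟨s, s, x, x, hs, hs, le_rfl, le_rfl, Or.inl rfl, hx, hx, ?_⟩
        rw [← hfx]
        funext p
        simp [glue]
      · rw [Set.mem_iUnion] at hf
        obtain ⟨i, hf⟩ := hf
        rw [Set.mem_iUnion] at hf
        obtain ⟨hi, hf⟩ := hf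
        rw [Finset.mem_Ico] at hi
        obtain ⟨x, hx, y, hy, hfe⟩ := hf
        exact ⟨i, s - i, x, y, hi.1, by omega, by omega, by omega,
          Or.inr ⟨by omega, by omega⟩, hx, hy, hfe⟩

lemma dist_main : ∀ m a b, 1 ≤ a → 1 ≤ b →
    ∀ f g, f ∈ maskSet m a → g ∈ maskSet m b → f ≠ g →
    2 ^ m ≤ 2 ^ (max a b - 1) * dC f g := by
  intro m
  induction m with
  | zero =>
    intro a b _ _ f g _ _ hne
    have h1 : 1 ≤ dC f g := dC_pos hne
    have h2 : 1 ≤ 2 ^ (max a b - 1) := Nat.one_le_two_pow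
    calc 2 ^ 0 = 1 * 1 := by norm_num
    _ ≤ 2 ^ (max a b - 1) * dC f g := Nat.mul_le_mul h2 h1
  | succ m ih =>
    intro a b ha hb f g hf hg hne
    have hd1 : 1 ≤ dC f g := dC_pos hne
    -- helper for base cases
    have base : ∀ c : ℕ, 2 ≤ c → m + 1 ≤ Nat.clog 2 c → c ≤ max a b →
        2 ^ (m+1) ≤ 2 ^ (max a b - 1) * dC f g := by
      intro c hc hclog hcm
      have h3 : Nat.clog 2 c ≤ c - 1 := by
        rw [Nat.clog_le_iff_le_pow (by norm_num : (1:ℕ) < 2)]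
        have := Nat.lt_two_pow_self (n := c - 1)
        omega
      have : 2 ^ (m+1) ≤ 2 ^ (max a b - 1) := Nat.pow_le_pow_right (by norm_num) (by omega)
      calc 2 ^ (m+1) ≤ 2 ^ (max a b - 1) * 1 := by rw [Nat.mul_one]; exact this
      _ ≤ 2 ^ (max a b - 1) * dC f g := Nat.mul_le_mul_left _ hd1
    rcases mem_rec ha hf with hbase | ⟨p, q, u, v, hp1, hq1, hpa, hqa, hfd, hu, hv, hfe⟩
    · exact base a hbase.1 hbase.2 (le_max_left _ _)
    rcases mem_rec hb hg with hbase | ⟨r, t, w, z, hr1, ht1, hrb, htb, hgd, hw, hz, hge⟩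
    · exact base b hbase.1 hbase.2 (le_max_right _ _)
    have hdc : dC f g = dC u w + dC v z := by rw [hfe, hge]; exact dC_glue u v w z
    -- step helpers
    have step1 : ∀ (i j : ℕ) (x y : (Fin m → ZMod 2) → ZMod 2),
        1 ≤ i → 1 ≤ j → x ∈ maskSet m i → y ∈ maskSet m j → x ≠ y →
        max i j ≤ max a b - 1 →
        2 ^ (m+1) ≤ 2 ^ (max a b - 1) * dC x y := by
      intro i j x y hi hj hx hy hxy hle
      have h := ih i j hi hj x y hx hy hxy
      have h4 : max i j - 1 + 1 = max i j := by omega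
      have hexp : 2 ^ (m+1) ≤ 2 ^ (max i j) * dC x y := by
        calc 2 ^ (m+1) = 2 * 2 ^ m := by ring
        _ ≤ 2 * (2 ^ (max i j - 1) * dC x y) := by omega
        _ = 2 ^ (max i j - 1 + 1) * dC x y := by ring
        _ = 2 ^ (max i j) * dC x y := by rw [h4]
      calc 2 ^ (m+1) ≤ 2 ^ (max i j) * dC x y := hexp
      _ ≤ 2 ^ (max a b - 1) * dC x y :=
          Nat.mul_le_mul_right _ (Nat.pow_le_pow_right (by norm_num) hle)
    have step2 : ∀ (i j : ℕ) (x y : (Fin m → ZMod 2) → ZMod 2),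
        1 ≤ i → 1 ≤ j → x ∈ maskSet m i → y ∈ maskSet m j → x ≠ y →
        i ≤ max a b → j ≤ max a b →
        2 ^ m ≤ 2 ^ (max a b - 1) * dC x y := by
      intro i j x y hi hj hx hy hxy hia hja
      have h := ih i j hi hj x y hx hy hxy
      calc 2 ^ m ≤ 2 ^ (max i j - 1) * dC x y := h
      _ ≤ 2 ^ (max a b - 1) * dC x y :=
          Nat.mul_le_mul_right _ (Nat.pow_le_pow_right (by norm_num) (by omega))
    by_cases h1 : u = w
    · by_cases h2 : v = z
      · exact absurd (by rw [hfe, hge, h1, h2]) hne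
      · -- u = w, v ≠ z : bound via dC v z
        have key : 2 ^ (m+1) ≤ 2 ^ (max a b - 1) * dC v z := by
          rcases hfd with hxy | ⟨hpa', hqa'⟩
          · -- f doubled : u = v
            rcases hgd with hwz | ⟨hra', hta'⟩
            · exact absurd (hxy.symm.trans (h1.trans hwz)) h2
            · -- g split : v = u = w ∈ M r
              have hv' : v ∈ maskSet m r := by rw [← hxy, h1]; exact hw
              exact step1 r t v z hr1 ht1 hv' hz h2 (by omega)
          · rcases hgd with hwz | ⟨hra', hta'⟩
            · -- g doubled : z = w = u ∈ M p
              have hz' : z ∈ maskSet m p := by rw [← hwz, ← h1]; exact hu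
              exact step1 q p v z hq1 hp1 hv hz' h2 (by omega)
            · exact step1 q t v z hq1 ht1 hv hz h2 (by omega)
        calc 2 ^ (m+1) ≤ 2 ^ (max a b - 1) * dC v z := key
        _ ≤ 2 ^ (max a b - 1) * dC f g := by rw [hdc]; exact Nat.mul_le_mul_left _ (by omega)
    · by_cases h2 : v = z
      · -- u ≠ w, v = z : bound via dC u w
        have key : 2 ^ (m+1) ≤ 2 ^ (max a b - 1) * dC u w := by
          rcases hfd with hxy | ⟨hpa', hqa'⟩
          · rcases hgd with hwz | ⟨hra', hta'⟩
            · exact absurd (hxy.trans (h2.trans hwz.symm)) h1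
            · -- g split : u = v = z ∈ M t
              have hu' : u ∈ maskSet m t := by rw [hxy, h2]; exact hz
              exact step1 t r u w ht1 hr1 hu' hw h1 (by omega)
          · rcases hgd with hwz | ⟨hra', hta'⟩
            · -- g doubled : w = z = v ∈ M q
              have hw' : w ∈ maskSet m q := by rw [hwz, ← h2]; exact hv
              exact step1 p q u w hp1 hq1 hu hw' h1 (by omega)
            · exact step1 p r u w hp1 hr1 hu hw h1 (by omega)
        calc 2 ^ (m+1) ≤ 2 ^ (max a b - 1) * dC u w := key
        _ ≤ 2 ^ (max a b - 1) * dC f g := by rw [hdc]; exact Nat.mul_le_mul_left _ (by omega)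
      · -- both differ
        have k1 : 2 ^ m ≤ 2 ^ (max a b - 1) * dC u w :=
          step2 p r u w hp1 hr1 hu hw h1 (by omega) (by omega)
        have k2 : 2 ^ m ≤ 2 ^ (max a b - 1) * dC v z :=
          step2 q t v z hq1 ht1 hv hz h2 (by omega) (by omega)
        have : 2 ^ (m+1) = 2 ^ m + 2 ^ m := by ring
        rw [hdc, Nat.mul_add]
        omega

lemma binom_aux (x : ℕ) : ∀ n : ℕ, x ^ (n+1) + (n+1) * x ^ n ≤ (x+1) ^ (n+1) := by
  intro n
  induction n with
  | zero => simp
  | succ n ih =>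
    have h1 : (x+1) ^ (n+2) = (x+1) ^ (n+1) * (x+1) := by ring
    have h2 : (x ^ (n+1) + (n+1) * x ^ n) * (x+1)
        = x ^ (n+2) + (n+2) * x ^ (n+1) + (n+1) * x ^ n := by ring
    calc x ^ (n+2) + (n+2) * x ^ (n+1)
        ≤ (x ^ (n+1) + (n+1) * x ^ n) * (x+1) := by omega
    _ ≤ (x+1) ^ (n+1) * (x+1) := Nat.mul_le_mul_right _ ih
    _ = (x+1) ^ (n+2) := h1.symm

lemma key_ineq (k : ℕ) (hk : 1 ≤ k) : 2 * (k-1) ^ k ≤ k ^ k := by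
  obtain ⟨j, rfl⟩ : ∃ j, k = j + 1 := ⟨k - 1, by omega⟩
  have h1 := binom_aux j j
  have h2 : (j+1) * j ^ j = j ^ (j+1) + j ^ j := by ring
  have h3 : j ^ (j + 1) ≤ j ^ (j+1) := le_rfl
  simp only [Nat.add_sub_cancel]
  omega

lemma card_tuples {α : Type*} [Fintype α] [DecidableEq α] (P : α → Prop) [DecidablePred P]
    (t : ℕ) :
    (Finset.univ.filter fun c : Fin t → α => ∀ i, P (c i)).card
      = (Finset.univ.filter P).card ^ t := by
  classical
  rw [← Fintype.card_subtype, ← Fintype.card_subtype]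
  have e : {c : Fin t → α // ∀ i, P (c i)} ≃ (Fin t → {x : α // P x}) :=
    Equiv.subtypePiEquivPi
  rw [Fintype.card_congr e, Fintype.card_fun, Fintype.card_fin]

theorem Lmin_upper' (s m : ℕ) (hs : 2 ≤ s) (hsm : s ≤ m) :
    Lmin s m ≤ 2 ^ s * (2 * Nat.clog 2 (maskSet m s).ncard - 1) := by
  classical
  obtain ⟨m', rfl⟩ : ∃ mm, m = mm + 1 := ⟨m - 1, by omega⟩
  set M : ℕ := m' + 1 with hM
  set S : Set ((Fin M → ZMod 2) → ZMod 2) := maskSet M s with hS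
  set n : ℕ := S.ncard with hn
  set K : ℕ := Nat.clog 2 n with hK
  set t : ℕ := 2 ^ s * (2 * K - 1) with ht
  -- three distinct elements of S
  have hf0 : (fun _ => (0:ZMod 2)) ∈ S := const_mem 0 M s (by omega)
  have hf1 : (fun _ => (1:ZMod 2)) ∈ S := const_mem 1 M s (by omega)
  have hf01 : glue (fun _ => (0:ZMod 2)) (fun _ => (1:ZMod 2)) ∈ S := by
    show glue (fun _ => (0:ZMod 2)) (fun _ => (1:ZMod 2)) ∈ maskSet (m'+1) s
    rw [maskSet, if_neg (by omega : ¬ s ≤ 1)]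
    by_cases h2 : m' + 1 ≤ Nat.clog 2 s
    · rw [if_pos h2]; trivial
    · rw [if_neg h2]
      refine Set.mem_union_right _ ?_
      rw [Set.mem_iUnion]
      refine ⟨1, ?_⟩
      rw [Set.mem_iUnion]
      refine ⟨Finset.mem_Ico.mpr ⟨le_rfl, by omega⟩, ?_⟩
      exact ⟨fun _ => 0, const_mem 0 m' 1 le_rfl, fun _ => 1, const_mem 1 m' (s-1) (by omega),
        rfl⟩
  have hne01 : (fun _ => (0:ZMod 2)) ≠ (fun _ : Fin M → ZMod 2 => (1:ZMod 2)) := by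
    intro h
    exact absurd (congrFun h (fun _ => 0)) (by decide)
  have hne0g : (fun _ : Fin M → ZMod 2 => (0:ZMod 2)) ≠ glue (m := m') (fun _ => (0:ZMod 2)) (fun _ => (1:ZMod 2)) := by
    intro h
    have := congrFun h (fun _ => 1)
    simp [glue] at this
  have hne1g : (fun _ : Fin M → ZMod 2 => (1:ZMod 2)) ≠ glue (m := m') (fun _ => (0:ZMod 2)) (fun _ => (1:ZMod 2)) := by
    intro h
    have := congrFun h (fun _ => 0)
    simp [glue] at this
  have hn3 : 3 ≤ n := by
    have hsub : ({(fun _ => (0:ZMod 2)), (fun _ => (1:ZMod 2)),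
        glue (fun _ => (0:ZMod 2)) (fun _ => (1:ZMod 2))} :
        Set ((Fin M → ZMod 2) → ZMod 2)) ⊆ S := by
      intro x hx
      rcases hx with rfl | rfl | rfl
      · exact hf0
      · exact hf1
      · exact hf01
    have h3 : ({(fun _ => (0:ZMod 2)), (fun _ => (1:ZMod 2)),
        glue (fun _ => (0:ZMod 2)) (fun _ => (1:ZMod 2))} :
        Set ((Fin M → ZMod 2) → ZMod 2)).ncard = 3 :=
      Set.ncard_eq_three.mpr ⟨_, _, _, hne01, hne0g, hne1g, rfl⟩
    calc 3 = _ := h3.symm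
    _ ≤ n := Set.ncard_le_ncard hsub (Set.toFinite S)
  have hK2 : 2 ≤ K := by
    have : 1 < Nat.clog 2 n := (Nat.lt_clog_iff_pow_lt (by norm_num)).mpr (by omega)
    omega
  have hnK : n ≤ 2 ^ K := Nat.le_pow_clog (by norm_num) n
  have hcardV : Fintype.card (Fin M → ZMod 2) = 2 ^ M := by
    rw [Fintype.card_fun, Fintype.card_fin, ZMod.card]
  -- agreement bound for distinct pairs
  set Amax : ℕ := 2 ^ M - 2 ^ (M - s + 1) with hAmax
  have hagree : ∀ f ∈ S, ∀ g ∈ S, f ≠ g →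
      (Finset.univ.filter fun p => f p = g p).card ≤ Amax := by
    intro f hfS g hgS hfg
    have hd := dist_main M s s (by omega) (by omega) f g hfS hgS hfg
    rw [max_self] at hd
    have hdist : 2 ^ (M - s + 1) ≤ dC f g := by
      have hsplit : 2 ^ (s-1) * 2 ^ (M - s + 1) = 2 ^ M := by
        rw [← pow_add]
        congr 1
        omega
      by_contra hcon
      push_neg at hcon
      have : 2 ^ (s-1) * dC f g < 2 ^ (s-1) * 2 ^ (M-s+1) :=
        (Nat.mul_lt_mul_left (Nat.pow_pos (by norm_num : (0:ℕ) < 2))).mpr hcon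
      omega
    have hsum : (Finset.univ.filter fun p => f p = g p).card + dC f g = 2 ^ M := by
      have h := Finset.card_filter_add_card_filter_not
        (s := (Finset.univ : Finset (Fin M → ZMod 2))) (p := fun p => f p = g p)
      rw [Finset.card_univ, hcardV] at h
      have hcg : (Finset.univ.filter fun p => ¬ f p = g p).card = dC f g := rfl
      omega
    have h2M : 2 ^ (M - s + 1) ≤ 2 ^ M := Nat.pow_le_pow_right (by norm_num) (by omega)
    omega
  -- the bad set of tuples
  set B : Finset (Fin t → (Fin M → ZMod 2)) :=
    Finset.univ.filter (fun c => ∃ f ∈ S, ∃ g ∈ S, f ≠ g ∧ ∀ i, f (c i) = g (c i)) with hB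
  have hSfin : S.Finite := Set.toFinite S
  set F : Finset ((Fin M → ZMod 2) → ZMod 2) := hSfin.toFinset with hF
  have hFcard : F.card = n := (Set.ncard_eq_toFinset_card S hSfin).symm
  set pairs : Finset (((Fin M → ZMod 2) → ZMod 2) × ((Fin M → ZMod 2) → ZMod 2)) :=
    (F ×ˢ F).filter (fun q => q.1 ≠ q.2) with hpairs
  have hBsub : B ⊆ pairs.biUnion
      (fun q => Finset.univ.filter fun c => ∀ i, q.1 (c i) = q.2 (c i)) := by
    intro c hc
    rw [hB, Finset.mem_filter] at hc
    obtain ⟨-, f, hfS, g, hgS, hfg, hcfg⟩ := hc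
    rw [Finset.mem_biUnion]
    refine ⟨(f, g), ?_, ?_⟩
    · rw [hpairs, Finset.mem_filter, Finset.mem_product]
      exact ⟨⟨(Set.Finite.mem_toFinset _).mpr hfS, (Set.Finite.mem_toFinset _).mpr hgS⟩, hfg⟩
    · exact Finset.mem_filter.mpr ⟨Finset.mem_univ _, hcfg⟩
  have hpair_card : ∀ q ∈ pairs,
      (Finset.univ.filter fun c : Fin t → (Fin M → ZMod 2) =>
        ∀ i, q.1 (c i) = q.2 (c i)).card ≤ Amax ^ t := by
    intro q hq
    rw [hpairs, Finset.mem_filter, Finset.mem_product] at hq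
    rw [card_tuples (fun p => q.1 p = q.2 p)]
    exact Nat.pow_le_pow_left (hagree q.1 ((Set.Finite.mem_toFinset _).mp hq.1.1)
      q.2 ((Set.Finite.mem_toFinset _).mp hq.1.2) hq.2) t
  have hBcard : B.card ≤ n * n * Amax ^ t := by
    calc B.card ≤ (pairs.biUnion _).card := Finset.card_le_card hBsub
    _ ≤ ∑ q ∈ pairs, (Finset.univ.filter fun c : Fin t → (Fin M → ZMod 2) =>
          ∀ i, q.1 (c i) = q.2 (c i)).card := Finset.card_biUnion_le
    _ ≤ ∑ _q ∈ pairs, Amax ^ t := Finset.sum_le_sum hpair_card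
    _ = pairs.card * Amax ^ t := by rw [Finset.sum_const, smul_eq_mul]
    _ ≤ (n * n) * Amax ^ t := by
        refine Nat.mul_le_mul_right _ ?_
        calc pairs.card ≤ (F ×ˢ F).card := Finset.card_le_card (Finset.filter_subset _ _)
        _ = n * n := by rw [Finset.card_product, hFcard]
  -- numeric estimate
  have hnum : n * n * Amax ^ t < (2 ^ M) ^ t := by
    set k : ℕ := 2 ^ (s - 1) with hk
    have hk1 : 1 ≤ k := Nat.one_le_two_pow
    have hkc : k * 2 ^ (M - s + 1) = 2 ^ M := by
      rw [hk, ← pow_add]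
      congr 1
      omega
    have hAeq : Amax = (k - 1) * 2 ^ (M - s + 1) := by
      rw [hAmax, Nat.sub_mul, hkc, one_mul]
    have h2A : 2 * Amax ^ k ≤ (2 ^ M) ^ k := by
      calc 2 * Amax ^ k = 2 * ((k-1) ^ k * (2 ^ (M-s+1)) ^ k) := by rw [hAeq, mul_pow]
      _ = (2 * (k-1) ^ k) * (2 ^ (M-s+1)) ^ k := by ring
      _ ≤ k ^ k * (2 ^ (M-s+1)) ^ k := Nat.mul_le_mul_right _ (key_ineq k hk1)
      _ = (k * 2 ^ (M-s+1)) ^ k := (mul_pow _ _ _).symm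
      _ = (2 ^ M) ^ k := by rw [hkc]
    have hts : t = k * (2 * (2 * K - 1)) := by
      have h2s : 2 ^ s = 2 * k := by
        rw [hk, ← pow_succ']
        congr 1
        omega
      rw [ht, h2s]
      ring
    have hmain : 2 ^ (2 * (2 * K - 1)) * Amax ^ t ≤ (2 ^ M) ^ t := by
      have hpow := Nat.pow_le_pow_left h2A (2 * (2 * K - 1))
      rw [mul_pow, ← pow_mul, ← pow_mul] at hpow
      rw [← hts] at hpow
      exact hpow
    rcases Nat.eq_zero_or_pos (Amax ^ t) with hz | hpos
    · rw [hz, Nat.mul_zero]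
      exact Nat.pow_pos (Nat.pow_pos (by norm_num))
    · calc n * n * Amax ^ t ≤ 2 ^ (2 * K) * Amax ^ t := by
            refine Nat.mul_le_mul_right _ ?_
            calc n * n ≤ 2 ^ K * 2 ^ K := Nat.mul_le_mul hnK hnK
            _ = 2 ^ (2 * K) := by rw [← pow_add]; congr 1; ring
      _ < 2 ^ (2 * (2 * K - 1)) * Amax ^ t := by
            refine (Nat.mul_lt_mul_right hpos).mpr ?_
            exact Nat.pow_lt_pow_right (by norm_num) (by omega)
      _ ≤ (2 ^ M) ^ t := hmain
  -- find a good tuple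
  have hBlt : B.card < (Finset.univ : Finset (Fin t → (Fin M → ZMod 2))).card := by
    rw [Finset.card_univ, Fintype.card_fun, Fintype.card_fin, hcardV]
    exact lt_of_le_of_lt hBcard hnum
  obtain ⟨c, hcB⟩ : ∃ c : Fin t → (Fin M → ZMod 2), c ∉ B := by
    by_contra hcon
    push_neg at hcon
    have hsub : (Finset.univ : Finset (Fin t → (Fin M → ZMod 2))) ⊆ B := fun x _ => hcon x
    have := Finset.card_le_card hsub
    omega
  set L : Finset (Fin M → ZMod 2) := Finset.image c Finset.univ with hL
  have hLdist : Distinguishes L S := by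
    intro x hx y hy hxy
    by_contra hne
    apply hcB
    rw [hB, Finset.mem_filter]
    refine ⟨Finset.mem_univ _, x, hx, y, hy, hne, fun i => ?_⟩
    exact hxy (c i) (Finset.mem_image.mpr ⟨i, Finset.mem_univ _, rfl⟩)
  have hLcard : L.card ≤ t := by
    calc L.card ≤ (Finset.univ : Finset (Fin t)).card := Finset.card_image_le
    _ = t := by rw [Finset.card_univ, Fintype.card_fin]
  calc Lmin s M ≤ L.card := Nat.sInf_le ⟨L, rfl, hLdist⟩
  _ ≤ t := hLcard

/-- Upper bound on the minimum label size:
`L_min(s,m) ≤ 2^s * (2 * ⌈log₂ |M(s,m)|⌉ - 1)`. -/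
theorem Lmin_upper (s m : ℕ) (hs : 2 ≤ s) (hsm : s ≤ m) :
    Lmin s m ≤ 2 ^ s * (2 * Nat.clog 2 (maskSet m s).ncard - 1) :=
  Lmin_upper' s m hs hsm
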